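/- Let μ and ν be charges on 𝒜 and let μ̂ and ν̂ be their Stone extensions. Then ν is absolutely continuous with respect to μ (ν ≪ μ) if and only if every Borel subset E of F with μ̂(E) = 0 satisfies ν̂(E) = 0 (i.e., ν̂ is absolutely continuous with respect to μ̂ as measures). -/

import Mathlib

open Filter Topology MeasureTheory
open scoped ENNReal NNReal

variable {X : Type*}

/-- A field (algebra) of subsets of `X`. -/
def IsSetField (𝒜 : Set (Set X)) : Prop :=
  ∅ ∈ 𝒜 ∧ Set.univ ∈ 𝒜 ∧ (∀ A ∈ 𝒜, Aᶜ ∈ 𝒜) ∧ ∀ A ∈ 𝒜, ∀ B ∈ 𝒜, A ∪ B ∈ 𝒜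

/-- A σ-algebra of subsets of `X`. -/
def IsSigmaField (𝒜 : Set (Set X)) : Prop :=
  ∅ ∈ 𝒜 ∧ Set.univ ∈ 𝒜 ∧ (∀ A ∈ 𝒜, Aᶜ ∈ 𝒜) ∧
    ∀ A : ℕ → Set X, (∀ n, A n ∈ 𝒜) → (⋃ n, A n) ∈ 𝒜

/-- A (nonnegative, bounded) charge on the field `𝒜`: a nonnegative finitely
additive real-valued set function vanishing on `∅`. -/
def IsCharge (𝒜 : Set (Set X)) (μ : Set X → ℝ) : Prop :=
  μ ∅ = 0 ∧ (∀ A ∈ 𝒜, 0 ≤ μ A) ∧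
    ∀ A ∈ 𝒜, ∀ B ∈ 𝒜, Disjoint A B → μ (A ∪ B) = μ A + μ B

/-- `ν` is absolutely continuous w.r.t. `μ` (ε–δ sense), `ν ≪ μ`. -/
def AbsCont (𝒜 : Set (Set X)) (ν μ : Set X → ℝ) : Prop :=
  ∀ ε : ℝ, 0 < ε → ∃ δ : ℝ, 0 < δ ∧ ∀ A ∈ 𝒜, μ A < δ → ν A < ε

/-- `ν` is weakly absolutely continuous w.r.t. `μ`, `ν ≺ μ`. -/
def WeakAbsCont (𝒜 : Set (Set X)) (ν μ : Set X → ℝ) : Prop :=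
  ∀ A ∈ 𝒜, μ A = 0 → ν A = 0

/-- `μ` and `ν` are singular, `μ ⊥ ν`. -/
def Sing (𝒜 : Set (Set X)) (μ ν : Set X → ℝ) : Prop :=
  ∀ ε : ℝ, 0 < ε → ∃ D ∈ 𝒜, μ D < ε ∧ ν Dᶜ < ε

/-- `μ` and `ν` are strongly singular. -/
def StrongSing (𝒜 : Set (Set X)) (μ ν : Set X → ℝ) : Prop :=
  ∃ D ∈ 𝒜, μ D = 0 ∧ ν Dᶜ = 0

/-- The additive property of a charge: for every `ε > 0` and every increasing
sequence `Aᵢ` in `𝒜` there is `B ∈ 𝒜` with `μ B ≤ lim_i μ (A i) + ε` and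
`μ (A i \ B) = 0` for all `i`. -/
def HasAdditiveProperty (𝒜 : Set (Set X)) (μ : Set X → ℝ) : Prop :=
  ∀ ε : ℝ, 0 < ε → ∀ A : ℕ → Set X, (∀ i, A i ∈ 𝒜) → Monotone A →
    ∃ B ∈ 𝒜, ∃ L : ℝ, Tendsto (fun i => μ (A i)) atTop (𝓝 L) ∧
      μ B ≤ L + ε ∧ ∀ i, μ (A i \ B) = 0

/-- The support of a Borel measure: points all of whose open neighborhoods
have positive measure. -/
def msupp {F : Type*} [TopologicalSpace F] [MeasurableSpace F] (m : Measure F) : Set F :=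
  {x | ∀ U : Set F, IsOpen U → x ∈ U → 0 < m U}


/-- In a compact Hausdorff totally disconnected space, any compact set contained in an
open set is contained in a clopen set contained in the open set. -/
lemma exists_isClopen_between {F : Type*} [TopologicalSpace F] [CompactSpace F] [T2Space F]
    [TotallyDisconnectedSpace F] {K U : Set F} (hK : IsCompact K) (hU : IsOpen U)
    (hKU : K ⊆ U) : ∃ C : Set F, IsClopen C ∧ K ⊆ C ∧ C ⊆ U := by
  choose! V hV hxV hVU using fun x (hx : x ∈ K) =>
    compact_exists_isClopen_in_isOpen hU (hKU hx)
  obtain ⟨t, hts, htfin, hcover⟩ := hK.elim_finite_subcover_image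
    (fun x hx => (hV x hx).2) (fun x hx => Set.mem_biUnion hx (hxV x hx))
  exact ⟨⋃ x ∈ t, V x, htfin.isClopen_biUnion fun x hx => hV x (hts hx), hcover,
    Set.iUnion₂_subset fun x hx => hVU x (hts hx)⟩

/-- `ν ≪ μ` iff the Stone extension `ν̂` vanishes on all `μ̂`-null Borel sets. -/
theorem absCont_iff_stone_weakAbsCont
    {F : Type*} [TopologicalSpace F] [CompactSpace F] [T2Space F]
    [TotallyDisconnectedSpace F] [Nonempty F] [MeasurableSpace F] [BorelSpace F]
    (𝒜 : Set (Set X)) (h𝒜 : IsSetField 𝒜)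
    (μ ν : Set X → ℝ) (hμ : IsCharge 𝒜 μ) (hν : IsCharge 𝒜 ν)
    (φ : Set X → Set F)
    (hφ_inj : ∀ A ∈ 𝒜, ∀ B ∈ 𝒜, φ A = φ B → A = B)
    (hφ_clopen : ∀ A ∈ 𝒜, IsClopen (φ A))
    (hφ_surj : ∀ C : Set F, IsClopen C → ∃ A ∈ 𝒜, φ A = C)
    (hφ_empty : φ ∅ = ∅)
    (hφ_univ : φ Set.univ = Set.univ)
    (hφ_union : ∀ A ∈ 𝒜, ∀ B ∈ 𝒜, φ (A ∪ B) = φ A ∪ φ B)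
    (hφ_compl : ∀ A ∈ 𝒜, φ Aᶜ = (φ A)ᶜ)
    (μhat νhat : Measure F)
    [IsFiniteMeasure μhat] [μhat.Regular] [IsFiniteMeasure νhat] [νhat.Regular]
    (hμhat : ∀ A ∈ 𝒜, μhat (φ A) = ENNReal.ofReal (μ A))
    (hνhat : ∀ A ∈ 𝒜, νhat (φ A) = ENNReal.ofReal (ν A)) :
    AbsCont 𝒜 ν μ ↔
      ∀ E : Set F, MeasurableSet E → μhat E = 0 → νhat E = 0 := by
  obtain ⟨hν0, hνnn, hνadd⟩ := hν
  constructor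
  · -- forward direction
    intro hac E hE hμE
    -- show νhat E ≤ ofReal ε for every ε > 0
    refine le_antisymm ?_ zero_le
    refine ENNReal.le_of_forall_pos_le_add fun ε hε _ => ?_
    rw [zero_add]
    obtain ⟨δ, hδ, hδε⟩ := hac (ε : ℝ) (by exact_mod_cast hε)
    -- open U ⊇ E with μhat U < ofReal δ
    obtain ⟨U, hEU, hUo, hUμ⟩ :=
      Set.exists_isOpen_lt_of_lt E (ENNReal.ofReal δ) (by rw [hμE]; exact ENNReal.ofReal_pos.2 hδ)
    refine le_trans (measure_mono hEU) ?_
    by_contra hlt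
    push_neg at hlt
    obtain ⟨K, hKU, hKc, hKν⟩ := hUo.exists_lt_isCompact hlt
    obtain ⟨C, hC, hKC, hCU⟩ := exists_isClopen_between hKc hUo hKU
    obtain ⟨A, hA, rfl⟩ := hφ_surj C hC
    have hμA : μ A < δ := by
      have : μhat (φ A) < ENNReal.ofReal δ := lt_of_le_of_lt (measure_mono hCU) hUμ
      rw [hμhat A hA] at this
      exact (ENNReal.ofReal_lt_ofReal_iff hδ).1 this
    have hνA : ν A < ε := hδε A hA hμA
    have : (ε : ℝ≥0∞) < νhat (φ A) := lt_of_lt_of_le hKν (measure_mono hKC)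
    rw [hνhat A hA] at this
    rw [show ((ε : ℝ≥0) : ℝ≥0∞) = ENNReal.ofReal (ε : ℝ) from
      ENNReal.ofReal_coe_nnreal.symm] at this
    exact absurd ((ENNReal.ofReal_lt_ofReal_iff_of_nonneg ε.coe_nonneg).1 this) (not_lt.2 hνA.le)
  · -- backward direction
    intro h
    by_contra hac
    simp only [AbsCont, not_forall, not_exists] at hac
    obtain ⟨ε, hε, hεbad⟩ := hac
    have key : ∀ n : ℕ, ∃ A ∈ 𝒜, μ A < (1/2 : ℝ) ^ n ∧ ε ≤ ν A := by
      intro n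
      have := hεbad ((1/2 : ℝ) ^ n)
      push_neg at this
      obtain ⟨A, hA, hμA, hνA⟩ := this (by positivity)
      exact ⟨A, hA, hμA, hνA⟩
    choose A hA hμA hνA using key
    set C : ℕ → Set F := fun n => φ (A n) with hC
    have hCclopen : ∀ n, IsClopen (C n) := fun n => hφ_clopen _ (hA n)
    have hCmeas : ∀ n, MeasurableSet (C n) := fun n => (hCclopen n).2.measurableSet
    set S : ℕ → Set F := fun N => ⋃ n, C (N + n) with hS
    have hSmeas : ∀ N, MeasurableSet (S N) := fun N => MeasurableSet.iUnion fun n => hCmeas _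
    have hSanti : Antitone S := by
      intro N M hNM x hx
      obtain ⟨n, hn⟩ := Set.mem_iUnion.1 hx
      exact Set.mem_iUnion.2 ⟨M - N + n, by rwa [show N + (M - N + n) = M + n by omega]⟩
    set E : Set F := ⋂ N, S N with hEdef
    have hEmeas : MeasurableSet E := MeasurableSet.iInter hSmeas
    -- μhat E = 0
    have hμS : ∀ N, μhat (S N) ≤ 2 * ENNReal.ofReal ((1/2 : ℝ) ^ N) := by
      intro N
      calc μhat (S N) ≤ ∑' n, μhat (C (N + n)) := measure_iUnion_le _
        _ ≤ ∑' n : ℕ, ENNReal.ofReal ((1/2 : ℝ) ^ (N + n)) := by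
            refine ENNReal.tsum_le_tsum fun n => ?_
            rw [hμhat _ (hA (N + n))]
            exact ENNReal.ofReal_le_ofReal (hμA (N + n)).le
        _ = ∑' n : ℕ, ENNReal.ofReal ((1/2 : ℝ) ^ N) * ENNReal.ofReal ((1/2 : ℝ) ^ n) := by
            congr 1; funext n
            rw [pow_add, ENNReal.ofReal_mul (by positivity)]
        _ = ENNReal.ofReal ((1/2 : ℝ) ^ N) * ∑' n : ℕ, ENNReal.ofReal ((1/2 : ℝ) ^ n) :=
            ENNReal.tsum_mul_left
        _ = 2 * ENNReal.ofReal ((1/2 : ℝ) ^ N) := by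
            rw [mul_comm]
            congr 1
            have : ∀ n : ℕ, ENNReal.ofReal ((1/2 : ℝ) ^ n) = (1/2 : ℝ≥0∞) ^ n := by
              intro n
              rw [ENNReal.ofReal_pow (by norm_num)]
              norm_num
              rw [ENNReal.ofReal_div_of_pos (by norm_num)]
              norm_num
            simp only [this]
            have h2 : (1/2 : ℝ≥0∞) = 2⁻¹ := by norm_num
            rw [h2, ENNReal.tsum_geometric, ← ENNReal.one_sub_inv_two,
              ENNReal.sub_sub_cancel ENNReal.one_ne_top (ENNReal.inv_le_one.2 one_le_two),
              inv_inv]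
    have hμE : μhat E = 0 := by
      refine le_antisymm ?_ zero_le
      have h1 : Tendsto (fun N : ℕ => 2 * ENNReal.ofReal ((1/2 : ℝ) ^ N)) atTop (𝓝 (2 * 0)) := by
        refine ENNReal.Tendsto.const_mul ?_ (Or.inr (by norm_num))
        have : Tendsto (fun N : ℕ => ((1/2 : ℝ) ^ N)) atTop (𝓝 0) := by
          apply tendsto_pow_atTop_nhds_zero_of_lt_one <;> norm_num
        simpa [ENNReal.ofReal_zero] using
          (ENNReal.tendsto_ofReal this)
      rw [mul_zero] at h1
      exact ge_of_tendsto' h1 fun N => le_trans (measure_mono (Set.iInter_subset _ N)) (hμS N)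
    -- νhat E ≥ ofReal ε
    have hνS : ∀ N, ENNReal.ofReal ε ≤ νhat (S N) := by
      intro N
      refine le_trans ?_ (measure_mono (Set.subset_iUnion (fun n => C (N + n)) 0))
      rw [hC]
      rw [hνhat _ (hA (N + 0))]
      exact ENNReal.ofReal_le_ofReal (hνA (N + 0))
    have hνE : ENNReal.ofReal ε ≤ νhat E := by
      rw [hEdef, Antitone.measure_iInter hSanti (fun N => (hSmeas N).nullMeasurableSet)
        ⟨0, measure_ne_top _ _⟩]
      exact le_iInf hνS
    rw [h E hEmeas hμE] at hνE
    simp only [nonpos_iff_eq_zero, ENNReal.ofReal_eq_zero] at hνE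
    linarith
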